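/- Let p be a prime and r ≥ 1. With F(x,y) = x₁y₁²+x₂y₂²+x₃y₃², the exponential sum satisfies S_{p^r}(m,n) = (p^{4r}/φ(p^r))·(N₀(p^r) − p^{-1}N₁(p^r)), where for j ∈ {0,1}, N_j(p^r) is the number of tuples (a, y₁, y₂, y₃) ∈ (ℤ/p^rℤ)⁴ with p ∤ a, n·y ≡ 0 mod p^{r−j}, and a·yᵢ² + mᵢ ≡ 0 mod p^r for i = 1,2,3. -/

import Mathlib

/-- e_q(t) = exp(2πit/q). -/
noncomputable def eChar (q : ℕ) (t : ℤ) : ℂ :=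
  Complex.exp (2 * Real.pi * Complex.I * (t : ℂ) / (q : ℂ))

lemma s14_eChar_add (q : ℕ) (s t : ℤ) : eChar q (s + t) = eChar q s * eChar q t := by
  unfold eChar
  rw [← Complex.exp_add]
  congr 1
  push_cast
  ring

lemma s14_eChar_zero (q : ℕ) : eChar q 0 = 1 := by
  unfold eChar; simp

lemma s14_eChar_congr {q : ℕ} (hq : q ≠ 0) {s t : ℤ} (h : (q : ℤ) ∣ s - t) :
    eChar q s = eChar q t := by
  obtain ⟨k, hk⟩ := h
  have hs : s = t + q * k := by linarith
  subst hs
  rw [s14_eChar_add]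
  have h1 : eChar q ((q : ℤ) * k) = 1 := by
    unfold eChar
    have hq' : (q : ℂ) ≠ 0 := Nat.cast_ne_zero.mpr hq
    rw [show 2 * (Real.pi : ℂ) * Complex.I * (((q : ℤ) * k : ℤ) : ℂ) / (q : ℂ)
        = (k : ℤ) * (2 * Real.pi * Complex.I) by push_cast; field_simp]
    exact Complex.exp_int_mul_two_pi_mul_I k
  rw [h1, mul_one]

lemma s14_sum_eChar (q : ℕ) (hq : q ≠ 0) (t : ℤ) :
    ∑ x ∈ Finset.range q, eChar q ((x : ℤ) * t) = if (q : ℤ) ∣ t then (q : ℂ) else 0 := by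
  have hz : ∀ x : ℕ, eChar q ((x : ℤ) * t) = eChar q t ^ x := by
    intro x
    unfold eChar
    rw [← Complex.exp_nat_mul]
    congr 1
    push_cast
    ring
  by_cases h : (q : ℤ) ∣ t
  · have h1 : eChar q t = 1 := by
      rw [s14_eChar_congr hq (show (q:ℤ) ∣ t - 0 by simpa using h), s14_eChar_zero]
    simp [hz, h1, h]
  · have hne : eChar q t ≠ 1 := by
      intro hcon
      unfold eChar at hcon
      obtain ⟨n, hn⟩ := Complex.exp_eq_one_iff.mp hcon
      have hq' : (q : ℂ) ≠ 0 := Nat.cast_ne_zero.mpr hq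
      have hpi : (2 : ℂ) * Real.pi * Complex.I ≠ 0 := by
        simp [Real.pi_ne_zero, Complex.I_ne_zero]
      have h2 : (t : ℂ) = (n : ℂ) * (q : ℂ) := by
        field_simp at hn
        have := hn
        -- hn : 2 * π * I * t = n * (2 * π * I) * q  (roughly)
        apply mul_left_cancel₀ hpi
        linear_combination (2 * (Real.pi : ℂ) * Complex.I) * this
      have h3 : t = n * q := by exact_mod_cast h2
      exact h ⟨n, by linarith [h3]⟩
    have hq1 : eChar q t ^ q = 1 := by
      rw [← hz q, s14_eChar_congr hq (show (q:ℤ) ∣ (q:ℤ) * t - 0 by simp), s14_eChar_zero]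
    simp only [hz]
    rw [geom_sum_eq hne, hq1]
    simp [h]

lemma s14_eChar_pmul (p : ℕ) (hp : p ≠ 0) (s : ℕ) (t : ℤ) :
    eChar (p ^ (s + 1)) ((p : ℤ) * t) = eChar (p ^ s) t := by
  unfold eChar
  congr 1
  have h1 : (p : ℂ) ≠ 0 := Nat.cast_ne_zero.mpr hp
  have h2 : ((p : ℂ)) ^ s ≠ 0 := pow_ne_zero _ h1
  push_cast
  rw [pow_succ]
  field_simp

lemma s14_ram (p : ℕ) (hp : p.Prime) (s : ℕ) (t : ℤ) :
    ∑ u ∈ (Finset.range (p ^ (s + 1))).filter (fun a => Nat.Coprime a (p ^ (s + 1))),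
        eChar (p ^ (s + 1)) ((u : ℤ) * t)
      = (if ((p : ℤ) ^ (s + 1)) ∣ t then ((p : ℂ)) ^ (s + 1) else 0)
        - (if ((p : ℤ) ^ s) ∣ t then ((p : ℂ)) ^ s else 0) := by
  have hq : p ^ (s + 1) ≠ 0 := pow_ne_zero _ hp.pos.ne'
  have htot := Finset.sum_filter_add_sum_filter_not (Finset.range (p ^ (s + 1)))
    (fun a => Nat.Coprime a (p ^ (s + 1))) (fun u => eChar (p ^ (s + 1)) ((u : ℤ) * t))
  have hall : ∑ u ∈ Finset.range (p ^ (s + 1)), eChar (p ^ (s + 1)) ((u : ℤ) * t)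
      = if ((p : ℤ) ^ (s + 1)) ∣ t then ((p : ℂ)) ^ (s + 1) else 0 := by
    rw [s14_sum_eChar _ hq t]
    simp only [Nat.cast_pow]
  have hfilt : (Finset.range (p ^ (s + 1))).filter (fun a => ¬ Nat.Coprime a (p ^ (s + 1)))
      = (Finset.range (p ^ (s + 1))).filter (fun a => p ∣ a) := by
    apply Finset.filter_congr
    intro a _
    rw [Nat.coprime_pow_right_iff (Nat.succ_pos s), Nat.coprime_comm,
      hp.coprime_iff_not_dvd, not_not]
  have hnc : ∑ u ∈ (Finset.range (p ^ (s + 1))).filter (fun a => ¬ Nat.Coprime a (p ^ (s + 1))),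
      eChar (p ^ (s + 1)) ((u : ℤ) * t)
      = if ((p : ℤ) ^ s) ∣ t then ((p : ℂ)) ^ s else 0 := by
    rw [hfilt]
    have hbij : ∑ u ∈ (Finset.range (p ^ (s + 1))).filter (fun a => p ∣ a),
        eChar (p ^ (s + 1)) ((u : ℤ) * t)
        = ∑ w ∈ Finset.range (p ^ s), eChar (p ^ s) ((w : ℤ) * t) := by
      apply Finset.sum_nbij' (fun u => u / p) (fun w => p * w)
      · intro a ha
        simp only [Finset.mem_filter, Finset.mem_range] at ha
        simp only [Finset.mem_range]
        rw [Nat.div_lt_iff_lt_mul hp.pos]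
        calc a < p ^ (s + 1) := ha.1
          _ = p ^ s * p := pow_succ p s
      · intro w hw
        simp only [Finset.mem_range] at hw
        simp only [Finset.mem_filter, Finset.mem_range]
        refine ⟨?_, Dvd.intro w rfl⟩
        have h1 : p * w < p * p ^ s := mul_lt_mul_of_pos_left hw hp.pos
        have h2 : p * p ^ s = p ^ (s + 1) := by rw [pow_succ]; ring
        omega
      · intro a ha
        simp only [Finset.mem_filter] at ha
        exact Nat.mul_div_cancel' ha.2
      · intro w _
        exact Nat.mul_div_cancel_left w hp.pos
      · intro a ha
        simp only [Finset.mem_filter] at ha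
        obtain ⟨c, hc⟩ := ha.2
        subst hc
        rw [Nat.mul_div_cancel_left c hp.pos]
        rw [show ((p * c : ℕ) : ℤ) * t = (p : ℤ) * ((c : ℤ) * t) by push_cast; ring]
        rw [s14_eChar_pmul p hp.pos.ne' s]
    rw [hbij, s14_sum_eChar _ (pow_ne_zero s hp.pos.ne') t]
    simp only [Nat.cast_pow]
  calc ∑ u ∈ (Finset.range (p ^ (s + 1))).filter (fun a => Nat.Coprime a (p ^ (s + 1))),
        eChar (p ^ (s + 1)) ((u : ℤ) * t)
      = (∑ u ∈ Finset.range (p ^ (s + 1)), eChar (p ^ (s + 1)) ((u : ℤ) * t))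
        - ∑ u ∈ (Finset.range (p ^ (s + 1))).filter (fun a => ¬ Nat.Coprime a (p ^ (s + 1))),
            eChar (p ^ (s + 1)) ((u : ℤ) * t) := by
        rw [← htot]; ring
    _ = _ := by rw [hall, hnc]

lemma s14_swap1 (s t : Finset ℕ) (f : ℕ → ℕ → ℕ → ℕ → ℂ) :
    (∑ x ∈ s, ∑ y₁ ∈ t, ∑ y₂ ∈ t, ∑ y₃ ∈ t, f x y₁ y₂ y₃)
      = ∑ y₁ ∈ t, ∑ y₂ ∈ t, ∑ y₃ ∈ t, ∑ x ∈ s, f x y₁ y₂ y₃ := by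
  rw [Finset.sum_comm]
  exact Finset.sum_congr rfl fun y₁ _ => by
    rw [Finset.sum_comm]
    exact Finset.sum_congr rfl fun y₂ _ => Finset.sum_comm

lemma s14_swap6 (s : Finset ℕ) (g : ℕ → ℕ → ℕ → ℕ → ℕ → ℕ → ℂ) :
    (∑ x₁ ∈ s, ∑ x₂ ∈ s, ∑ x₃ ∈ s, ∑ y₁ ∈ s, ∑ y₂ ∈ s, ∑ y₃ ∈ s, g x₁ x₂ x₃ y₁ y₂ y₃)
      = ∑ y₁ ∈ s, ∑ y₂ ∈ s, ∑ y₃ ∈ s, ∑ x₁ ∈ s, ∑ x₂ ∈ s, ∑ x₃ ∈ s, g x₁ x₂ x₃ y₁ y₂ y₃ :=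
  calc (∑ x₁ ∈ s, ∑ x₂ ∈ s, ∑ x₃ ∈ s, ∑ y₁ ∈ s, ∑ y₂ ∈ s, ∑ y₃ ∈ s, g x₁ x₂ x₃ y₁ y₂ y₃)
      = ∑ x₁ ∈ s, ∑ x₂ ∈ s, ∑ y₁ ∈ s, ∑ y₂ ∈ s, ∑ y₃ ∈ s, ∑ x₃ ∈ s, g x₁ x₂ x₃ y₁ y₂ y₃ :=
        Finset.sum_congr rfl fun x₁ _ => Finset.sum_congr rfl fun x₂ _ => s14_swap1 s s _
    _ = ∑ x₁ ∈ s, ∑ y₁ ∈ s, ∑ y₂ ∈ s, ∑ y₃ ∈ s, ∑ x₂ ∈ s, ∑ x₃ ∈ s, g x₁ x₂ x₃ y₁ y₂ y₃ :=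
        Finset.sum_congr rfl fun x₁ _ => s14_swap1 s s _
    _ = _ := s14_swap1 s s _

lemma s14_triple (q : ℕ) (hq : q ≠ 0) (t₁ t₂ t₃ c : ℤ) :
    (∑ x₁ ∈ Finset.range q, ∑ x₂ ∈ Finset.range q, ∑ x₃ ∈ Finset.range q,
        eChar q ((x₁ : ℤ) * t₁ + (x₂ : ℤ) * t₂ + (x₃ : ℤ) * t₃ + c))
      = (if (q : ℤ) ∣ t₁ then (q : ℂ) else 0) * ((if (q : ℤ) ∣ t₂ then (q : ℂ) else 0)
          * ((if (q : ℤ) ∣ t₃ then (q : ℂ) else 0) * eChar q c)) := by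
  have e : ∀ x₁ x₂ x₃ : ℕ, eChar q ((x₁ : ℤ) * t₁ + (x₂ : ℤ) * t₂ + (x₃ : ℤ) * t₃ + c)
      = eChar q ((x₁ : ℤ) * t₁) * (eChar q ((x₂ : ℤ) * t₂) * (eChar q ((x₃ : ℤ) * t₃) * eChar q c)) := by
    intro x₁ x₂ x₃
    rw [← s14_eChar_add, ← s14_eChar_add, ← s14_eChar_add]
    congr 1
    ring
  simp only [e]
  simp only [← Finset.mul_sum, ← Finset.sum_mul]
  rw [s14_sum_eChar q hq t₁, s14_sum_eChar q hq t₂, s14_sum_eChar q hq t₃]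

lemma s14_copr_mod (x q : ℕ) : Nat.Coprime (x % q) q ↔ Nat.Coprime x q := by
  unfold Nat.Coprime
  rw [show Nat.gcd (x % q) q = Nat.gcd x q from by rw [← Nat.gcd_rec, Nat.gcd_comm]]

lemma s14_zmod (q x : ℕ) : ((x % q : ℕ) : ℤ) ≡ (x : ℤ) [ZMOD (q : ℤ)] := by
  show ((x % q : ℕ) : ℤ) % (q : ℤ) = (x : ℤ) % (q : ℤ)
  rw [Int.natCast_mod]
  exact Int.emod_emod_of_dvd _ dvd_rfl

def s14_T (q : ℕ) (m₁ m₂ m₃ : ℤ) : Finset (ℕ × ℕ × ℕ × ℕ) :=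
  ((Finset.range q ×ˢ Finset.range q ×ˢ Finset.range q ×ˢ Finset.range q).filter
    (fun t => Nat.Coprime t.1 q ∧
      (q : ℤ) ∣ ((t.1 : ℤ) * (t.2.1 : ℤ) ^ 2 + m₁) ∧
      (q : ℤ) ∣ ((t.1 : ℤ) * (t.2.2.1 : ℤ) ^ 2 + m₂) ∧
      (q : ℤ) ∣ ((t.1 : ℤ) * (t.2.2.2 : ℤ) ^ 2 + m₃)))

def s14_NY (n₁ n₂ n₃ : ℤ) (t : ℕ × ℕ × ℕ × ℕ) : ℤ :=
  n₁ * t.2.1 + n₂ * t.2.2.1 + n₃ * t.2.2.2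

def s14_map (q u' w' : ℕ) (t : ℕ × ℕ × ℕ × ℕ) : ℕ × ℕ × ℕ × ℕ :=
  (t.1 * w' * w' % q, u' * t.2.1 % q, u' * t.2.2.1 % q, u' * t.2.2.2 % q)

lemma s14_mem_map (q : ℕ) (hq : q ≠ 0) (m₁ m₂ m₃ : ℤ) (u' w' : ℕ)
    (hu : Nat.Coprime u' q) (hw : Nat.Coprime w' q)
    (huw : ((u' : ℤ) * (w' : ℤ)) ≡ 1 [ZMOD (q : ℤ)]) :
    ∀ t ∈ s14_T q m₁ m₂ m₃, s14_map q u' w' t ∈ s14_T q m₁ m₂ m₃ := by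
  rintro ⟨a, y₁, y₂, y₃⟩ ht
  simp only [s14_T, s14_map, Finset.mem_filter, Finset.mem_product, Finset.mem_range] at ht ⊢
  obtain ⟨⟨ha, hy₁, hy₂, hy₃⟩, hcop, hd₁, hd₂, hd₃⟩ := ht
  have hqpos : 0 < q := Nat.pos_of_ne_zero hq
  refine ⟨⟨Nat.mod_lt _ hqpos, Nat.mod_lt _ hqpos, Nat.mod_lt _ hqpos, Nat.mod_lt _ hqpos⟩,
    ?_, ?_, ?_, ?_⟩
  · rw [s14_copr_mod]
    exact (hcop.mul hw).mul hw
  · have e1 : ((a * w' * w' % q : ℕ) : ℤ) * ((u' * y₁ % q : ℕ) : ℤ) ^ 2 + m₁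
        ≡ (a : ℤ) * (y₁ : ℤ) ^ 2 + m₁ [ZMOD (q : ℤ)] := by
      calc ((a * w' * w' % q : ℕ) : ℤ) * ((u' * y₁ % q : ℕ) : ℤ) ^ 2 + m₁
          ≡ ((a * w' * w' : ℕ) : ℤ) * ((u' * y₁ : ℕ) : ℤ) ^ 2 + m₁ [ZMOD (q : ℤ)] :=
            ((s14_zmod q _).mul ((s14_zmod q _).pow 2)).add_right m₁
        _ = ((a : ℤ) * (y₁ : ℤ) ^ 2) * (((u' : ℤ) * (w' : ℤ)) * ((u' : ℤ) * (w' : ℤ))) + m₁ := by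
            push_cast; ring
        _ ≡ ((a : ℤ) * (y₁ : ℤ) ^ 2) * (1 * 1) + m₁ [ZMOD (q : ℤ)] :=
            ((Int.ModEq.refl _).mul (huw.mul huw)).add_right m₁
        _ = (a : ℤ) * (y₁ : ℤ) ^ 2 + m₁ := by ring
    exact Int.modEq_zero_iff_dvd.mp (e1.trans (Int.modEq_zero_iff_dvd.mpr hd₁))
  · have e1 : ((a * w' * w' % q : ℕ) : ℤ) * ((u' * y₂ % q : ℕ) : ℤ) ^ 2 + m₂
        ≡ (a : ℤ) * (y₂ : ℤ) ^ 2 + m₂ [ZMOD (q : ℤ)] := by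
      calc ((a * w' * w' % q : ℕ) : ℤ) * ((u' * y₂ % q : ℕ) : ℤ) ^ 2 + m₂
          ≡ ((a * w' * w' : ℕ) : ℤ) * ((u' * y₂ : ℕ) : ℤ) ^ 2 + m₂ [ZMOD (q : ℤ)] :=
            ((s14_zmod q _).mul ((s14_zmod q _).pow 2)).add_right m₂
        _ = ((a : ℤ) * (y₂ : ℤ) ^ 2) * (((u' : ℤ) * (w' : ℤ)) * ((u' : ℤ) * (w' : ℤ))) + m₂ := by
            push_cast; ring
        _ ≡ ((a : ℤ) * (y₂ : ℤ) ^ 2) * (1 * 1) + m₂ [ZMOD (q : ℤ)] :=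
            ((Int.ModEq.refl _).mul (huw.mul huw)).add_right m₂
        _ = (a : ℤ) * (y₂ : ℤ) ^ 2 + m₂ := by ring
    exact Int.modEq_zero_iff_dvd.mp (e1.trans (Int.modEq_zero_iff_dvd.mpr hd₂))
  · have e1 : ((a * w' * w' % q : ℕ) : ℤ) * ((u' * y₃ % q : ℕ) : ℤ) ^ 2 + m₃
        ≡ (a : ℤ) * (y₃ : ℤ) ^ 2 + m₃ [ZMOD (q : ℤ)] := by
      calc ((a * w' * w' % q : ℕ) : ℤ) * ((u' * y₃ % q : ℕ) : ℤ) ^ 2 + m₃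
          ≡ ((a * w' * w' : ℕ) : ℤ) * ((u' * y₃ : ℕ) : ℤ) ^ 2 + m₃ [ZMOD (q : ℤ)] :=
            ((s14_zmod q _).mul ((s14_zmod q _).pow 2)).add_right m₃
        _ = ((a : ℤ) * (y₃ : ℤ) ^ 2) * (((u' : ℤ) * (w' : ℤ)) * ((u' : ℤ) * (w' : ℤ))) + m₃ := by
            push_cast; ring
        _ ≡ ((a : ℤ) * (y₃ : ℤ) ^ 2) * (1 * 1) + m₃ [ZMOD (q : ℤ)] :=
            ((Int.ModEq.refl _).mul (huw.mul huw)).add_right m₃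
        _ = (a : ℤ) * (y₃ : ℤ) ^ 2 + m₃ := by ring
    exact Int.modEq_zero_iff_dvd.mp (e1.trans (Int.modEq_zero_iff_dvd.mpr hd₃))

lemma s14_map_inv (q : ℕ) (hq : q ≠ 0) (m₁ m₂ m₃ : ℤ) (u' w' : ℕ)
    (huw : Nat.ModEq q (u' * w') 1) :
    ∀ t ∈ s14_T q m₁ m₂ m₃, s14_map q w' u' (s14_map q u' w' t) = t := by
  rintro ⟨a, y₁, y₂, y₃⟩ ht
  simp only [s14_T, Finset.mem_filter, Finset.mem_product, Finset.mem_range] at ht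
  obtain ⟨⟨ha, hy₁, hy₂, hy₃⟩, -⟩ := ht
  have hqpos : 0 < q := Nat.pos_of_ne_zero hq
  have hcomp1 : (a * w' * w' % q) * u' * u' % q = a := by
    have e : (a * w' * w' % q) * u' * u' ≡ a [MOD q] := by
      calc (a * w' * w' % q) * u' * u'
          ≡ (a * w' * w') * u' * u' [MOD q] :=
            ((Nat.mod_modEq _ q).mul_right u').mul_right u'
        _ = a * ((u' * w') * (u' * w')) := by ring
        _ ≡ a * (1 * 1) [MOD q] := (Nat.ModEq.refl a).mul (huw.mul huw)
        _ = a := by ring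
    calc (a * w' * w' % q) * u' * u' % q = a % q := e
      _ = a := Nat.mod_eq_of_lt ha
  have hcompy : ∀ y : ℕ, y < q → w' * (u' * y % q) % q = y := by
    intro y hy
    have e : w' * (u' * y % q) ≡ y [MOD q] := by
      calc w' * (u' * y % q) ≡ w' * (u' * y) [MOD q] := (Nat.mod_modEq _ q).mul_left w'
        _ = (u' * w') * y := by ring
        _ ≡ 1 * y [MOD q] := huw.mul_right y
        _ = y := by ring
    calc w' * (u' * y % q) % q = y % q := e
      _ = y := Nat.mod_eq_of_lt hy
  simp only [s14_map]
  exact Prod.ext hcomp1 (Prod.ext (hcompy y₁ hy₁) (Prod.ext (hcompy y₂ hy₂) (hcompy y₃ hy₃)))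

lemma s14_avg (q : ℕ) (hq : q ≠ 0) (m₁ m₂ m₃ n₁ n₂ n₃ : ℤ) (u : ℕ) (hu : Nat.Coprime u q) :
    ∑ t ∈ s14_T q m₁ m₂ m₃, eChar q ((u : ℤ) * s14_NY n₁ n₂ n₃ t)
      = ∑ t ∈ s14_T q m₁ m₂ m₃, eChar q (s14_NY n₁ n₂ n₃ t) := by
  haveI : NeZero q := ⟨hq⟩
  set w := ((u : ZMod q)⁻¹).val with hwdef
  have hwcast : ((w : ℕ) : ZMod q) = ((u : ZMod q))⁻¹ := ZMod.natCast_rightInverse _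
  have huw1 : ((u * w : ℕ) : ZMod q) = ((1 : ℕ) : ZMod q) := by
    push_cast [hwcast]
    exact ZMod.coe_mul_inv_eq_one u hu
  have huwN : Nat.ModEq q (u * w) 1 := (ZMod.natCast_eq_natCast_iff _ _ _).mp huw1
  have huwZ : ((u : ℤ) * (w : ℤ)) ≡ 1 [ZMOD (q : ℤ)] := by
    have h : (u * w) % q = 1 % q := huwN
    show ((u : ℤ) * (w : ℤ)) % (q : ℤ) = 1 % (q : ℤ)
    rw [show (u : ℤ) * (w : ℤ) = ((u * w : ℕ) : ℤ) from by push_cast; ring,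
      show (1 : ℤ) = ((1 : ℕ) : ℤ) from rfl, ← Int.natCast_mod, ← Int.natCast_mod, h]
  have hwuZ : ((w : ℤ) * (u : ℤ)) ≡ 1 [ZMOD (q : ℤ)] := by rwa [mul_comm] at huwZ
  have hwuN : Nat.ModEq q (w * u) 1 := by rwa [mul_comm] at huwN
  have hcopw : Nat.Coprime w q := by
    have h1 : Nat.Coprime (u * w) q := by
      rw [← s14_copr_mod, huwN, s14_copr_mod]
      exact Nat.coprime_one_left q
    exact Nat.Coprime.coprime_dvd_left (Dvd.intro_left u rfl) h1
  apply Finset.sum_nbij' (s14_map q u w) (s14_map q w u)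
  · exact s14_mem_map q hq m₁ m₂ m₃ u w hu hcopw huwZ
  · exact s14_mem_map q hq m₁ m₂ m₃ w u hcopw hu hwuZ
  · exact s14_map_inv q hq m₁ m₂ m₃ u w huwN
  · exact s14_map_inv q hq m₁ m₂ m₃ w u hwuN
  · rintro ⟨a, y₁, y₂, y₃⟩ _
    apply s14_eChar_congr hq
    have e : s14_NY n₁ n₂ n₃ (s14_map q u w (a, y₁, y₂, y₃))
        ≡ (u : ℤ) * s14_NY n₁ n₂ n₃ (a, y₁, y₂, y₃) [ZMOD (q : ℤ)] := by
      simp only [s14_NY, s14_map]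
      calc n₁ * ((u * y₁ % q : ℕ) : ℤ) + n₂ * ((u * y₂ % q : ℕ) : ℤ) + n₃ * ((u * y₃ % q : ℕ) : ℤ)
          ≡ n₁ * ((u * y₁ : ℕ) : ℤ) + n₂ * ((u * y₂ : ℕ) : ℤ) + n₃ * ((u * y₃ : ℕ) : ℤ)
            [ZMOD (q : ℤ)] :=
            (((s14_zmod q _).mul_left n₁).add ((s14_zmod q _).mul_left n₂)).add
              ((s14_zmod q _).mul_left n₃)
        _ = (u : ℤ) * (n₁ * (y₁ : ℤ) + n₂ * (y₂ : ℤ) + n₃ * (y₃ : ℤ)) := by push_cast; ring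
    exact e.dvd

/-- The complete exponential sum S_q(m,n) for F(x,y) = x₁y₁² + x₂y₂² + x₃y₃²:
S_q(m,n) = Σ*_{a mod q} Σ_{x,y mod q} e_q(aF(x,y) + m·x + n·y). -/
noncomputable def expSum (q : ℕ) (m₁ m₂ m₃ n₁ n₂ n₃ : ℤ) : ℂ :=
  ∑ a ∈ (Finset.range q).filter (fun a => Nat.Coprime a q),
    ∑ x₁ ∈ Finset.range q, ∑ x₂ ∈ Finset.range q, ∑ x₃ ∈ Finset.range q,
      ∑ y₁ ∈ Finset.range q, ∑ y₂ ∈ Finset.range q, ∑ y₃ ∈ Finset.range q,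
        eChar q ((a : ℤ) * ((x₁ : ℤ) * (y₁ : ℤ) ^ 2 + (x₂ : ℤ) * (y₂ : ℤ) ^ 2
            + (x₃ : ℤ) * (y₃ : ℤ) ^ 2)
          + m₁ * (x₁ : ℤ) + m₂ * (x₂ : ℤ) + m₃ * (x₃ : ℤ)
          + n₁ * (y₁ : ℤ) + n₂ * (y₂ : ℤ) + n₃ * (y₃ : ℤ))

/-- N_j(p^r): the number of (a, y₁, y₂, y₃) ∈ (ℤ/p^rℤ)⁴ with p ∤ a,
n·y ≡ 0 mod p^{r−j}, and a·yᵢ² + mᵢ ≡ 0 mod p^r for i = 1, 2, 3. -/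
def Ncount (p r j : ℕ) (m₁ m₂ m₃ n₁ n₂ n₃ : ℤ) : ℕ :=
  ((Finset.range (p ^ r) ×ˢ Finset.range (p ^ r) ×ˢ Finset.range (p ^ r)
      ×ˢ Finset.range (p ^ r)).filter
    (fun t => ¬ p ∣ t.1 ∧
      (n₁ * (t.2.1 : ℤ) + n₂ * (t.2.2.1 : ℤ) + n₃ * (t.2.2.2 : ℤ)) % ((p : ℤ) ^ (r - j)) = 0 ∧
      ((t.1 : ℤ) * (t.2.1 : ℤ) ^ 2 + m₁) % ((p : ℤ) ^ r) = 0 ∧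
      ((t.1 : ℤ) * (t.2.2.1 : ℤ) ^ 2 + m₂) % ((p : ℤ) ^ r) = 0 ∧
      ((t.1 : ℤ) * (t.2.2.2 : ℤ) ^ 2 + m₃) % ((p : ℤ) ^ r) = 0)).card

lemma s14_stepA (q : ℕ) (hq : q ≠ 0) (m₁ m₂ m₃ n₁ n₂ n₃ : ℤ) :
    expSum q m₁ m₂ m₃ n₁ n₂ n₃
      = (q : ℂ) ^ 3 * ∑ t ∈ s14_T q m₁ m₂ m₃, eChar q (s14_NY n₁ n₂ n₃ t) := by
  have hA : ∀ a : ℕ,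
      (∑ x₁ ∈ Finset.range q, ∑ x₂ ∈ Finset.range q, ∑ x₃ ∈ Finset.range q,
        ∑ y₁ ∈ Finset.range q, ∑ y₂ ∈ Finset.range q, ∑ y₃ ∈ Finset.range q,
          eChar q ((a : ℤ) * ((x₁ : ℤ) * (y₁ : ℤ) ^ 2 + (x₂ : ℤ) * (y₂ : ℤ) ^ 2
              + (x₃ : ℤ) * (y₃ : ℤ) ^ 2)
            + m₁ * (x₁ : ℤ) + m₂ * (x₂ : ℤ) + m₃ * (x₃ : ℤ)
            + n₁ * (y₁ : ℤ) + n₂ * (y₂ : ℤ) + n₃ * (y₃ : ℤ)))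
      = ∑ y₁ ∈ Finset.range q, ∑ y₂ ∈ Finset.range q, ∑ y₃ ∈ Finset.range q,
          ((if (q : ℤ) ∣ ((a : ℤ) * (y₁ : ℤ) ^ 2 + m₁) then (q : ℂ) else 0) *
            ((if (q : ℤ) ∣ ((a : ℤ) * (y₂ : ℤ) ^ 2 + m₂) then (q : ℂ) else 0) *
              ((if (q : ℤ) ∣ ((a : ℤ) * (y₃ : ℤ) ^ 2 + m₃) then (q : ℂ) else 0) *
                eChar q (n₁ * (y₁ : ℤ) + n₂ * (y₂ : ℤ) + n₃ * (y₃ : ℤ))))) := by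
    intro a
    rw [s14_swap6]
    refine Finset.sum_congr rfl fun y₁ _ => Finset.sum_congr rfl fun y₂ _ =>
      Finset.sum_congr rfl fun y₃ _ => ?_
    rw [← s14_triple q hq ((a : ℤ) * (y₁ : ℤ) ^ 2 + m₁) ((a : ℤ) * (y₂ : ℤ) ^ 2 + m₂)
      ((a : ℤ) * (y₃ : ℤ) ^ 2 + m₃) (n₁ * (y₁ : ℤ) + n₂ * (y₂ : ℤ) + n₃ * (y₃ : ℤ))]
    refine Finset.sum_congr rfl fun x₁ _ => Finset.sum_congr rfl fun x₂ _ =>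
      Finset.sum_congr rfl fun x₃ _ => ?_
    congr 1
    push_cast
    ring
  unfold expSum
  rw [Finset.sum_congr rfl fun a _ => hA a]
  have point : ∀ (c d₁ d₂ d₃ : Prop) [Decidable c] [Decidable d₁] [Decidable d₂] [Decidable d₃]
      (E : ℂ),
      (if c then (if d₁ then (q : ℂ) else 0) * ((if d₂ then (q : ℂ) else 0)
          * ((if d₃ then (q : ℂ) else 0) * E)) else 0)
        = if c ∧ d₁ ∧ d₂ ∧ d₃ then (q : ℂ) ^ 3 * E else 0 := by
    intro c d₁ d₂ d₃ _ _ _ _ E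
    by_cases hc : c <;> by_cases h1 : d₁ <;> by_cases h2 : d₂ <;> by_cases h3 : d₃ <;>
      simp [hc, h1, h2, h3] <;> ring
  calc ∑ a ∈ (Finset.range q).filter (fun a => Nat.Coprime a q),
        ∑ y₁ ∈ Finset.range q, ∑ y₂ ∈ Finset.range q, ∑ y₃ ∈ Finset.range q,
          ((if (q : ℤ) ∣ ((a : ℤ) * (y₁ : ℤ) ^ 2 + m₁) then (q : ℂ) else 0) *
            ((if (q : ℤ) ∣ ((a : ℤ) * (y₂ : ℤ) ^ 2 + m₂) then (q : ℂ) else 0) *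
              ((if (q : ℤ) ∣ ((a : ℤ) * (y₃ : ℤ) ^ 2 + m₃) then (q : ℂ) else 0) *
                eChar q (n₁ * (y₁ : ℤ) + n₂ * (y₂ : ℤ) + n₃ * (y₃ : ℤ)))))
      = ∑ a ∈ Finset.range q, ∑ y₁ ∈ Finset.range q, ∑ y₂ ∈ Finset.range q,
          ∑ y₃ ∈ Finset.range q,
          (if Nat.Coprime a q ∧ (q : ℤ) ∣ ((a : ℤ) * (y₁ : ℤ) ^ 2 + m₁)
              ∧ (q : ℤ) ∣ ((a : ℤ) * (y₂ : ℤ) ^ 2 + m₂)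
              ∧ (q : ℤ) ∣ ((a : ℤ) * (y₃ : ℤ) ^ 2 + m₃)
            then (q : ℂ) ^ 3 * eChar q (n₁ * (y₁ : ℤ) + n₂ * (y₂ : ℤ) + n₃ * (y₃ : ℤ))
            else 0) := by
        rw [Finset.sum_filter]
        refine Finset.sum_congr rfl fun a _ => ?_
        by_cases hc : Nat.Coprime a q
        · rw [if_pos hc]
          refine Finset.sum_congr rfl fun y₁ _ => Finset.sum_congr rfl fun y₂ _ =>
            Finset.sum_congr rfl fun y₃ _ => ?_
          rw [← point (Nat.Coprime a q) _ _ _ _, if_pos hc]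
        · rw [if_neg hc]
          symm
          refine Finset.sum_eq_zero fun y₁ _ => Finset.sum_eq_zero fun y₂ _ =>
            Finset.sum_eq_zero fun y₃ _ => ?_
          simp [hc]
    _ = ∑ t ∈ (Finset.range q ×ˢ Finset.range q ×ˢ Finset.range q ×ˢ Finset.range q),
          (if Nat.Coprime t.1 q ∧ (q : ℤ) ∣ ((t.1 : ℤ) * (t.2.1 : ℤ) ^ 2 + m₁)
              ∧ (q : ℤ) ∣ ((t.1 : ℤ) * (t.2.2.1 : ℤ) ^ 2 + m₂)
              ∧ (q : ℤ) ∣ ((t.1 : ℤ) * (t.2.2.2 : ℤ) ^ 2 + m₃)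
            then (q : ℂ) ^ 3 * eChar q (s14_NY n₁ n₂ n₃ t) else 0) := by
        rw [Finset.sum_product]
        refine Finset.sum_congr rfl fun a _ => ?_
        rw [Finset.sum_product]
        refine Finset.sum_congr rfl fun y₁ _ => ?_
        rw [Finset.sum_product]
        rfl
    _ = (q : ℂ) ^ 3 * ∑ t ∈ s14_T q m₁ m₂ m₃, eChar q (s14_NY n₁ n₂ n₃ t) := by
        rw [s14_T, ← Finset.sum_filter, Finset.mul_sum]

lemma s14_stepB (p : ℕ) (hp : p.Prime) (s : ℕ) (m₁ m₂ m₃ n₁ n₂ n₃ : ℤ) :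
    (Nat.totient (p ^ (s + 1)) : ℂ)
        * ∑ t ∈ s14_T (p ^ (s + 1)) m₁ m₂ m₃, eChar (p ^ (s + 1)) (s14_NY n₁ n₂ n₃ t)
      = (p : ℂ) ^ (s + 1) * (Ncount p (s + 1) 0 m₁ m₂ m₃ n₁ n₂ n₃ : ℂ)
        - (p : ℂ) ^ s * (Ncount p (s + 1) 1 m₁ m₂ m₃ n₁ n₂ n₃ : ℂ) := by
  have hq : p ^ (s + 1) ≠ 0 := pow_ne_zero _ hp.pos.ne'
  have hcard : ((Finset.range (p ^ (s + 1))).filter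
      (fun a => Nat.Coprime a (p ^ (s + 1)))).card = Nat.totient (p ^ (s + 1)) := by
    rw [Nat.totient]
    congr 1
    apply Finset.filter_congr
    intro x _
    exact Iff.symm Nat.coprime_comm
  have hNfilters : ∀ j : ℕ, ((s14_T (p ^ (s + 1)) m₁ m₂ m₃).filter
        (fun t => ((p : ℤ) ^ (s + 1 - j)) ∣ s14_NY n₁ n₂ n₃ t)).card
      = Ncount p (s + 1) j m₁ m₂ m₃ n₁ n₂ n₃ := by
    intro j
    rw [Ncount, s14_T, Finset.filter_filter]
    congr 1
    apply Finset.filter_congr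
    rintro ⟨a, y₁, y₂, y₃⟩ _
    have h1 : Nat.Coprime a (p ^ (s + 1)) ↔ ¬ p ∣ a := by
      rw [Nat.coprime_pow_right_iff (Nat.succ_pos s), Nat.coprime_comm,
        hp.coprime_iff_not_dvd]
    have h2 : ∀ X : ℤ, (((p ^ (s + 1) : ℕ) : ℤ) ∣ X) ↔ X % ((p : ℤ) ^ (s + 1)) = 0 := by
      intro X
      rw [show ((p ^ (s + 1) : ℕ) : ℤ) = (p : ℤ) ^ (s + 1) from by push_cast; ring]
      exact Int.dvd_iff_emod_eq_zero
    have h3 : ∀ X : ℤ, (((p : ℤ) ^ (s + 1 - j)) ∣ X) ↔ X % ((p : ℤ) ^ (s + 1 - j)) = 0 :=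
      fun X => Int.dvd_iff_emod_eq_zero
    simp only [s14_NY, h1, h2, h3]
    tauto
  calc (Nat.totient (p ^ (s + 1)) : ℂ)
        * ∑ t ∈ s14_T (p ^ (s + 1)) m₁ m₂ m₃, eChar (p ^ (s + 1)) (s14_NY n₁ n₂ n₃ t)
      = ∑ u ∈ (Finset.range (p ^ (s + 1))).filter (fun a => Nat.Coprime a (p ^ (s + 1))),
          ∑ t ∈ s14_T (p ^ (s + 1)) m₁ m₂ m₃, eChar (p ^ (s + 1)) ((u : ℤ) * s14_NY n₁ n₂ n₃ t) := by
        rw [Finset.sum_congr rfl (fun u hu => s14_avg (p ^ (s + 1)) hq m₁ m₂ m₃ n₁ n₂ n₃ u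
          (Finset.mem_filter.mp hu).2), Finset.sum_const, nsmul_eq_mul, hcard]
    _ = ∑ t ∈ s14_T (p ^ (s + 1)) m₁ m₂ m₃,
          ∑ u ∈ (Finset.range (p ^ (s + 1))).filter (fun a => Nat.Coprime a (p ^ (s + 1))),
            eChar (p ^ (s + 1)) ((u : ℤ) * s14_NY n₁ n₂ n₃ t) := Finset.sum_comm
    _ = ∑ t ∈ s14_T (p ^ (s + 1)) m₁ m₂ m₃,
          ((if ((p : ℤ) ^ (s + 1)) ∣ s14_NY n₁ n₂ n₃ t then ((p : ℂ)) ^ (s + 1) else 0)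
            - (if ((p : ℤ) ^ s) ∣ s14_NY n₁ n₂ n₃ t then ((p : ℂ)) ^ s else 0)) :=
        Finset.sum_congr rfl fun t _ => s14_ram p hp s (s14_NY n₁ n₂ n₃ t)
    _ = (p : ℂ) ^ (s + 1) * (Ncount p (s + 1) 0 m₁ m₂ m₃ n₁ n₂ n₃ : ℂ)
        - (p : ℂ) ^ s * (Ncount p (s + 1) 1 m₁ m₂ m₃ n₁ n₂ n₃ : ℂ) := by
        rw [Finset.sum_sub_distrib]
        congr 1
        · rw [← Finset.sum_filter, Finset.sum_const, nsmul_eq_mul]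
          have h0 := hNfilters 0
          norm_num at h0
          rw [h0, mul_comm]
        · rw [← Finset.sum_filter, Finset.sum_const, nsmul_eq_mul]
          have h1 := hNfilters 1
          norm_num at h1
          rw [h1, mul_comm]

/-- S_{p^r}(m,n) = (p^{4r}/φ(p^r))·(N₀(p^r) − p⁻¹N₁(p^r)). -/
theorem stmt14 (p : ℕ) (hp : p.Prime) (r : ℕ) (hr : 1 ≤ r) (m₁ m₂ m₃ n₁ n₂ n₃ : ℤ) :
    expSum (p ^ r) m₁ m₂ m₃ n₁ n₂ n₃
      = (p : ℂ) ^ (4 * r) / (Nat.totient (p ^ r) : ℂ)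
        * ((Ncount p r 0 m₁ m₂ m₃ n₁ n₂ n₃ : ℂ)
          - (Ncount p r 1 m₁ m₂ m₃ n₁ n₂ n₃ : ℂ) / (p : ℂ)) := by

  obtain ⟨s, rfl⟩ : ∃ s, r = s + 1 := ⟨r - 1, by omega⟩
  have hq : p ^ (s + 1) ≠ 0 := pow_ne_zero _ hp.pos.ne'
  have hφ : (Nat.totient (p ^ (s + 1)) : ℂ) ≠ 0 :=
    Nat.cast_ne_zero.mpr (Nat.totient_pos.mpr (Nat.pos_of_ne_zero hq)).ne'
  have hp0 : (p : ℂ) ≠ 0 := Nat.cast_ne_zero.mpr hp.pos.ne'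
  have hSig : ∑ t ∈ s14_T (p ^ (s + 1)) m₁ m₂ m₃, eChar (p ^ (s + 1)) (s14_NY n₁ n₂ n₃ t)
      = ((p : ℂ) ^ (s + 1) * (Ncount p (s + 1) 0 m₁ m₂ m₃ n₁ n₂ n₃ : ℂ)
        - (p : ℂ) ^ s * (Ncount p (s + 1) 1 m₁ m₂ m₃ n₁ n₂ n₃ : ℂ))
        / (Nat.totient (p ^ (s + 1)) : ℂ) := by
    rw [eq_div_iff hφ]
    linear_combination s14_stepB p hp s m₁ m₂ m₃ n₁ n₂ n₃
  rw [s14_stepA (p ^ (s + 1)) hq m₁ m₂ m₃ n₁ n₂ n₃, hSig]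
  rw [show ((p ^ (s + 1) : ℕ) : ℂ) = (p : ℂ) ^ (s + 1) from by push_cast; ring]
  field_simp
  ring
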